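/- Let U ⊆ ℂ be open and φ₁, φ₂, φ₃ : ℂ → ℂ be holomorphic on U with φ₁² + φ₂² + φ₃² = 0 on U and λ := (|φ₁|² + |φ₂|² + |φ₃|²)/2 > 0 on U. Define real-valued functions α := −Im(φ₂·conj(φ₃))/λ, β := −Im(φ₃·conj(φ₁))/λ, γ := −Im(φ₁·conj(φ₂))/λ on U. Then at every z ∈ U with α(z) ≠ −1, the ℂ-valued function ζ := (β + iγ)/(1 + α) has vanishing Wirtinger derivative with respect to z̄: ∂̄ζ(z) = 0. In other words, the stereographic coordinate of the Gauss map (α, β, γ) : U → S² is a holomorphic function of z. -/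

import Mathlib

open Complex ComplexConjugate

lemma him (w : ℂ) : ((w.im : ℝ) : ℂ) = (conj w - w) * Complex.I / 2 := by
  have h := Complex.sub_conj w
  have : conj w - w = -(w - (starRingEnd ℂ) w) := by ring
  rw [this, h]
  push_cast
  linear_combination ((w.im : ℝ) : ℂ) * Complex.I_sq

lemma habs (w : ℂ) : ((‖w‖ : ℝ) : ℂ) ^ 2 = w * conj w := by
  rw [← Complex.ofReal_pow, ← Complex.normSq_eq_norm_sq, Complex.mul_conj]

lemma hns (a b c : ℂ) :
    (‖a‖ ^ 2 + ‖b‖ ^ 2 + ‖c‖ ^ 2) / 2 - (b * conj c).im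
      = (Complex.normSq a + Complex.normSq (b - Complex.I * c)) / 2 := by
  simp only [← Complex.sq_norm, Complex.normSq_apply, Complex.sub_re, Complex.sub_im,
    Complex.mul_re, Complex.mul_im, Complex.I_re, Complex.I_im, Complex.conj_re,
    Complex.conj_im, Complex.sq_norm]
  simp [Complex.normSq_apply]
  ring

lemma chart_aux (x y w r : ℝ) (hr0 : r ≠ 0) :
    ((↑(-(x / r)) : ℂ) + Complex.I * ↑(-(y / r))) / (1 + ↑(-(w / r)))
      = (((-x : ℝ) : ℂ) + Complex.I * ((-y : ℝ) : ℂ)) / ((r : ℂ) - (w : ℂ)) := by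
  have h : (r : ℂ) ≠ 0 := Complex.ofReal_ne_zero.mpr hr0
  rw [show ((↑(-(x / r)) : ℂ) + Complex.I * ↑(-(y / r)))
      = (((-x : ℝ) : ℂ) + Complex.I * ((-y : ℝ) : ℂ)) / (r : ℂ) by push_cast; field_simp]
  rw [show ((1 : ℂ) + ↑(-(w / r))) = ((r : ℂ) - (w : ℂ)) / (r : ℂ) by
    push_cast; field_simp; ring]
  rw [div_div_div_comm, div_self h, div_one]

lemma chart1 (a b c : ℂ) (hs : a ^ 2 + b ^ 2 + c ^ 2 = 0) (r : ℝ)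
    (hr : r = (‖a‖ ^ 2 + ‖b‖ ^ 2 + ‖c‖ ^ 2) / 2)
    (ha : a ≠ 0) :
    ((↑(-((c * conj a).im / r)) : ℂ) + Complex.I * ↑(-((a * conj b).im / r))) /
        (1 + ↑(-((b * conj c).im / r)))
      = (b + Complex.I * c) / a := by
  have hden : r - (b * conj c).im ≠ 0 := by
    rw [hr, hns]
    have h1 : 0 < Complex.normSq a := Complex.normSq_pos.mpr ha
    have h2 : 0 ≤ Complex.normSq (b - Complex.I * c) := Complex.normSq_nonneg _
    positivity
  have hr0 : r ≠ 0 := by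
    have h1 : 0 < ‖a‖ := norm_pos_iff.mpr ha
    rw [hr]; positivity
  rw [chart_aux _ _ _ r hr0]
  have hdenC : ((r : ℂ) - (((b * conj c).im : ℝ) : ℂ)) ≠ 0 := by
    rw [← Complex.ofReal_sub]
    exact Complex.ofReal_ne_zero.mpr hden
  rw [div_eq_div_iff hdenC ha, hr]
  push_cast
  rw [him, him, him, habs, habs, habs]
  simp only [map_mul, Complex.conj_conj]
  linear_combination ((-(conj c) * Complex.I + conj b * Complex.I ^ 2) / 2) * hs +
    ((-(b * c * conj c) - b ^ 2 * conj b - a * b * conj a) / 2) * Complex.I_sq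

lemma chart2 (a b c : ℂ) (hs : a ^ 2 + b ^ 2 + c ^ 2 = 0) (r : ℝ)
    (hr : r = (‖a‖ ^ 2 + ‖b‖ ^ 2 + ‖c‖ ^ 2) / 2)
    (hbc : b - Complex.I * c ≠ 0) :
    ((↑(-((c * conj a).im / r)) : ℂ) + Complex.I * ↑(-((a * conj b).im / r))) /
        (1 + ↑(-((b * conj c).im / r)))
      = -a / (b - Complex.I * c) := by
  have hden : r - (b * conj c).im ≠ 0 := by
    rw [hr, hns]
    have h1 : 0 < Complex.normSq (b - Complex.I * c) := Complex.normSq_pos.mpr hbc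
    have h2 : 0 ≤ Complex.normSq a := Complex.normSq_nonneg _
    positivity
  have hr0 : r ≠ 0 := by
    intro h
    rw [h] at hr
    have hb2 : ‖b‖ ^ 2 = 0 := by
      nlinarith [sq_nonneg (‖a‖), sq_nonneg (‖c‖)]
    have hc2 : ‖c‖ ^ 2 = 0 := by
      nlinarith [sq_nonneg (‖a‖), sq_nonneg (‖b‖)]
    apply hbc
    rw [norm_eq_zero.mp (pow_eq_zero_iff two_ne_zero |>.mp hb2),
      norm_eq_zero.mp (pow_eq_zero_iff two_ne_zero |>.mp hc2)]
    ring
  rw [chart_aux _ _ _ r hr0]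
  have hdenC : ((r : ℂ) - (((b * conj c).im : ℝ) : ℂ)) ≠ 0 := by
    rw [← Complex.ofReal_sub]
    exact Complex.ofReal_ne_zero.mpr hden
  rw [div_eq_div_iff hdenC hbc, hr]
  push_cast
  rw [him, him, him, habs, habs, habs]
  simp only [map_mul, Complex.conj_conj]
  linear_combination (conj a / 2) * hs +
    ((-(c ^ 2 * conj a) + b * c * conj a * Complex.I - b ^ 2 * conj a + a * c * conj c
      - a * c * conj b * Complex.I + a * b * conj b) / 2) * Complex.I_sq

/-- The Wirtinger derivative with respect to `z̄` of a map `ℂ → ℂ`,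
viewed as a map between real vector spaces. -/
noncomputable def dbar (h : ℂ → ℂ) (z : ℂ) : ℂ :=
  (1 / 2) * (fderiv ℝ h z 1 + Complex.I • fderiv ℝ h z Complex.I)

lemma dbar_congr (g ζ : ℂ → ℂ) (z : ℂ) (hg : DifferentiableAt ℂ g z)
    (heq : ζ =ᶠ[nhds z] g) : dbar ζ z = 0 := by
  unfold dbar
  rw [heq.fderiv_eq, hg.fderiv_restrictScalars ℝ]
  have h1 : (fderiv ℂ g z).restrictScalars ℝ Complex.I
      = Complex.I • (fderiv ℂ g z).restrictScalars ℝ 1 := by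
    simp only [ContinuousLinearMap.coe_restrictScalars']
    rw [show (Complex.I : ℂ) = Complex.I • (1 : ℂ) by simp, map_smul]
    simp [smul_eq_mul]
  rw [h1]
  simp only [smul_eq_mul]
  rw [show Complex.I * (Complex.I * ((fderiv ℂ g z).restrictScalars ℝ) 1)
      = -(((fderiv ℂ g z).restrictScalars ℝ) 1) by
    rw [← mul_assoc, Complex.I_mul_I]; ring]
  ring

theorem gauss_map_stereographic_holomorphic
    (U : Set ℂ) (hU : IsOpen U) (φ₁ φ₂ φ₃ : ℂ → ℂ)
    (hφ₁ : DifferentiableOn ℂ φ₁ U) (hφ₂ : DifferentiableOn ℂ φ₂ U)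
    (hφ₃ : DifferentiableOn ℂ φ₃ U)
    (hsum : ∀ z ∈ U, φ₁ z ^ 2 + φ₂ z ^ 2 + φ₃ z ^ 2 = 0)
    (lam : ℂ → ℝ)
    (hlam : lam = fun z =>
      (‖φ₁ z‖ ^ 2 + ‖φ₂ z‖ ^ 2 + ‖φ₃ z‖ ^ 2) / 2)
    (hpos : ∀ z ∈ U, 0 < lam z)
    (α β γ : ℂ → ℂ)
    (hα : α = fun z => (↑(-((φ₂ z * conj (φ₃ z)).im / lam z)) : ℂ))
    (hβ : β = fun z => (↑(-((φ₃ z * conj (φ₁ z)).im / lam z)) : ℂ))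
    (hγ : γ = fun z => (↑(-((φ₁ z * conj (φ₂ z)).im / lam z)) : ℂ))
    (ζ : ℂ → ℂ) (hζ : ζ = fun w => (β w + Complex.I * γ w) / (1 + α w)) :
    ∀ z ∈ U, α z ≠ -1 → dbar ζ z = 0 := by
  intro z hz hαz
  -- dichotomy
  have hkey : φ₁ z ≠ 0 ∨ φ₂ z - Complex.I * φ₃ z ≠ 0 := by
    by_contra h
    push_neg at h
    obtain ⟨h1, h2⟩ := h
    apply hαz
    have hIm : (φ₂ z * conj (φ₃ z)).im = lam z := by
      have := hns (φ₁ z) (φ₂ z) (φ₃ z)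
      rw [h1, h2] at this
      simp only [Complex.normSq_zero, map_zero] at this
      rw [hlam]
      simp only [h1, map_zero]
      linarith [this]
    rw [hα]
    simp only [hIm]
    rw [div_self (hpos z hz).ne']
    norm_num
  have hζw : ∀ w ∈ U, ζ w
      = ((↑(-((φ₃ w * conj (φ₁ w)).im / lam w)) : ℂ)
          + Complex.I * ↑(-((φ₁ w * conj (φ₂ w)).im / lam w))) /
        (1 + ↑(-((φ₂ w * conj (φ₃ w)).im / lam w))) := by
    intro w _
    rw [hζ, hβ, hγ, hα]
  have hlamw : ∀ w : ℂ, lam w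
      = (‖φ₁ w‖ ^ 2 + ‖φ₂ w‖ ^ 2 + ‖φ₃ w‖ ^ 2) / 2 := by
    intro w; rw [hlam]
  rcases hkey with ha | hbc
  · -- chart 1 : ζ = (φ₂ + i φ₃)/φ₁ near z
    set W : Set ℂ := U ∩ φ₁ ⁻¹' {0}ᶜ with hW
    have hWopen : IsOpen W :=
      hφ₁.continuousOn.isOpen_inter_preimage hU isOpen_compl_singleton
    have hzW : z ∈ W := ⟨hz, ha⟩
    have heq : ζ =ᶠ[nhds z] fun w => (φ₂ w + Complex.I * φ₃ w) / φ₁ w := by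
      filter_upwards [hWopen.mem_nhds hzW] with w hw
      rw [hζw w hw.1]
      exact chart1 (φ₁ w) (φ₂ w) (φ₃ w) (hsum w hw.1) (lam w) (hlamw w) hw.2
    have hg : DifferentiableAt ℂ (fun w => (φ₂ w + Complex.I * φ₃ w) / φ₁ w) z := by
      have h1 := (hφ₁ z hz).differentiableAt (hU.mem_nhds hz)
      have h2 := (hφ₂ z hz).differentiableAt (hU.mem_nhds hz)
      have h3 := (hφ₃ z hz).differentiableAt (hU.mem_nhds hz)
      exact (h2.add (h3.const_mul _)).div h1 ha
    exact dbar_congr _ _ z hg heq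
  · -- chart 2 : ζ = -φ₁/(φ₂ - i φ₃) near z
    set W : Set ℂ := U ∩ (fun w => φ₂ w - Complex.I * φ₃ w) ⁻¹' {0}ᶜ with hW
    have hWopen : IsOpen W := by
      apply ContinuousOn.isOpen_inter_preimage _ hU isOpen_compl_singleton
      exact (hφ₂.sub (hφ₃.const_smul Complex.I)).continuousOn.congr
        (fun w _ => by simp [smul_eq_mul])
    have hzW : z ∈ W := ⟨hz, hbc⟩
    have heq : ζ =ᶠ[nhds z] fun w => -φ₁ w / (φ₂ w - Complex.I * φ₃ w) := by
      filter_upwards [hWopen.mem_nhds hzW] with w hw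
      rw [hζw w hw.1]
      exact chart2 (φ₁ w) (φ₂ w) (φ₃ w) (hsum w hw.1) (lam w) (hlamw w) hw.2
    have hg : DifferentiableAt ℂ (fun w => -φ₁ w / (φ₂ w - Complex.I * φ₃ w)) z := by
      have h1 := (hφ₁ z hz).differentiableAt (hU.mem_nhds hz)
      have h2 := (hφ₂ z hz).differentiableAt (hU.mem_nhds hz)
      have h3 := (hφ₃ z hz).differentiableAt (hU.mem_nhds hz)
      exact h1.neg.div (h2.sub (h3.const_mul _)) hbc
    exact dbar_congr _ _ z hg heq
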